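/- Let G be a finite simple graph on n vertices with minimum degree δ ≥ 3 that has a perfect matching M. Then OPT(G) ≤ (1 + 2/δ)·ALG(G, M). -/

import Mathlib

open SimpleGraph

/-- `C` is an edge 2-coloring of `G`: for every vertex, the edges incident to it
carry at most 2 distinct colors. -/
def IsEdge2Coloring {V : Type*} (G : SimpleGraph V) (C : Sym2 V → ℕ) : Prop :=
  ∀ v : V, (C '' G.incidenceSet v).ncard ≤ 2

/-- The number of distinct colors used by a coloring `C` on the edges of `G`. -/
noncomputable def numColors {V : Type*} (G : SimpleGraph V) (C : Sym2 V → ℕ) : ℕ :=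
  (C '' G.edgeSet).ncard

/-- `OPT G`: the maximum number of colors used by an edge 2-coloring of `G`. -/
noncomputable def OPT {V : Type*} (G : SimpleGraph V) : ℕ :=
  sSup {n : ℕ | ∃ C : Sym2 V → ℕ, IsEdge2Coloring G C ∧ numColors G C = n}

/-- `M` is a matching of `G`, given as a set of edges: the edges belong to `G` and
are pairwise vertex-disjoint. -/
def IsMatchingSet {V : Type*} (G : SimpleGraph V) (M : Set (Sym2 V)) : Prop :=
  M ⊆ G.edgeSet ∧ ∀ e ∈ M, ∀ f ∈ M, e ≠ f → ∀ v : V, v ∈ e → v ∉ f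

/-- `ALG G M`: number of colors produced by the matching based algorithm, i.e.
`|M|` plus the number of connected components of `G − M`. -/
noncomputable def ALG {V : Type*} (G : SimpleGraph V) (M : Set (Sym2 V)) : ℕ :=
  M.ncard + Nat.card (G.deleteEdges M).ConnectedComponent

/-- `H` is a characteristic subgraph of `G` with respect to the coloring `C`:
a subgraph of `G` containing exactly one edge of each color used by `C`. -/
def IsCharSubgraph {V : Type*} (G : SimpleGraph V) (C : Sym2 V → ℕ)
    (H : SimpleGraph V) : Prop :=
  H ≤ G ∧ ∀ c ∈ C '' G.edgeSet, ∃! e, e ∈ H.edgeSet ∧ C e = c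

section aux
variable {V : Type*} [Fintype V]

private noncomputable def incF (G : SimpleGraph V) (v : V) : Finset (Sym2 V) :=
  (G.incidenceSet v).toFinite.toFinset

private lemma mem_incF {G : SimpleGraph V} {v : V} {e : Sym2 V} :
    e ∈ incF G v ↔ e ∈ G.edgeSet ∧ v ∈ e := by
  simp [incF, SimpleGraph.incidenceSet]

private noncomputable def colorsAt (G : SimpleGraph V) (C : Sym2 V → ℕ) (v : V) : Finset ℕ :=
  (incF G v).image C

private noncomputable def mult (G : SimpleGraph V) (C : Sym2 V → ℕ) (v : V) (c : ℕ) : ℕ :=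
  ((incF G v).filter (fun e => C e = c)).card

private noncomputable def VC (G : SimpleGraph V) (C : Sym2 V → ℕ) (c : ℕ) : Finset V :=
  Finset.univ.filter (fun v => c ∈ colorsAt G C v)

private lemma mem_VC {G : SimpleGraph V} {C : Sym2 V → ℕ} {c : ℕ} {v : V} :
    v ∈ VC G C c ↔ c ∈ colorsAt G C v := by
  simp [VC]

private lemma card_colorsAt_le {G : SimpleGraph V} {C : Sym2 V → ℕ}
    (hC : IsEdge2Coloring G C) (v : V) : (colorsAt G C v).card ≤ 2 := by
  have h := hC v
  have : C '' G.incidenceSet v = ↑(colorsAt G C v) := by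
    rw [colorsAt, Finset.coe_image, incF, Set.Finite.coe_toFinset]
  rw [this, Set.ncard_coe_finset] at h
  exact h

private lemma delta_le_card_incF {G : SimpleGraph V} {δ : ℕ}
    (hδ : ∀ v : V, δ ≤ (G.neighborSet v).ncard) (v : V) : δ ≤ (incF G v).card := by
  classical
  refine le_trans (hδ v) ?_
  rw [Set.ncard_eq_toFinset_card (G.neighborSet v)]
  apply Finset.card_le_card_of_injOn (fun w => s(v, w))
  · intro w hw
    rw [Finset.mem_coe, Set.Finite.mem_toFinset] at hw
    rw [Finset.mem_coe, mem_incF]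
    exact ⟨G.mem_edgeSet.2 hw, Sym2.mem_mk_left v w⟩
  · intro w1 _ w2 _ h
    exact Sym2.congr_right.1 h

private lemma sum_mult {G : SimpleGraph V} {C : Sym2 V → ℕ} (v : V) :
    ∑ c ∈ colorsAt G C v, mult G C v c = (incF G v).card :=
  (Finset.card_eq_sum_card_image C (incF G v)).symm

private lemma mult_pos {G : SimpleGraph V} {C : Sym2 V → ℕ} {v : V} {c : ℕ}
    (h : c ∈ colorsAt G C v) : 1 ≤ mult G C v c := by
  classical
  rw [colorsAt, Finset.mem_image] at h
  obtain ⟨e, he, hce⟩ := h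
  rw [mult]
  exact Finset.card_pos.2 ⟨e, Finset.mem_filter.2 ⟨he, hce⟩⟩

private lemma mult_add_one_le {G : SimpleGraph V} {C : Sym2 V → ℕ} {v : V} {c : ℕ}
    (h : c ∈ colorsAt G C v) : mult G C v c + 1 ≤ (VC G C c).card := by
  classical
  have hv : v ∈ VC G C c := mem_VC.2 h
  have hle : mult G C v c ≤ ((VC G C c).erase v).card := by
    apply Finset.card_le_card_of_injOn (fun e => if he : v ∈ e then Sym2.Mem.other he else v)
    · intro e he
      rw [Finset.mem_coe, Finset.mem_filter] at he
      obtain ⟨hi, hce⟩ := he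
      rw [mem_incF] at hi
      obtain ⟨hedge, hve⟩ := hi
      beta_reduce
      rw [Finset.mem_coe, dif_pos hve]
      have hother := Sym2.other_mem hve
      have hne : Sym2.Mem.other hve ≠ v := Sym2.other_ne (G.not_isDiag_of_mem_edgeSet hedge) hve
      refine Finset.mem_erase.2 ⟨hne, mem_VC.2 ?_⟩
      rw [colorsAt, Finset.mem_image]
      exact ⟨e, mem_incF.2 ⟨hedge, hother⟩, hce⟩
    · intro e1 h1 e2 h2 heq
      simp only [Finset.coe_filter, Set.mem_setOf_eq] at h1 h2
      obtain ⟨h1i, -⟩ := h1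
      obtain ⟨h2i, -⟩ := h2
      have hv1 : v ∈ e1 := (mem_incF.1 h1i).2
      have hv2 : v ∈ e2 := (mem_incF.1 h2i).2
      simp only [dif_pos hv1, dif_pos hv2] at heq
      rw [← Sym2.other_spec hv1, ← Sym2.other_spec hv2, heq]
  have : ((VC G C c).erase v).card = (VC G C c).card - 1 := Finset.card_erase_of_mem hv
  have hpos : 1 ≤ (VC G C c).card := Finset.card_pos.2 ⟨v, hv⟩
  omega

private lemma two_le_VC {G : SimpleGraph V} {C : Sym2 V → ℕ} {c : ℕ}
    (h : c ∈ (G.edgeSet.toFinite.toFinset).image C) : 2 ≤ (VC G C c).card := by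
  classical
  rw [Finset.mem_image] at h
  obtain ⟨e, he, hce⟩ := h
  rw [Set.Finite.mem_toFinset] at he
  induction e using Sym2.ind with
  | _ x y =>
    have hxy : x ≠ y := fun h => (G.not_isDiag_of_mem_edgeSet he) (Sym2.mk_isDiag_iff.2 h)
    have hx : x ∈ VC G C c := mem_VC.2 (Finset.mem_image.2
      ⟨s(x, y), mem_incF.2 ⟨he, Sym2.mem_mk_left x y⟩, hce⟩)
    have hy : y ∈ VC G C c := mem_VC.2 (Finset.mem_image.2
      ⟨s(x, y), mem_incF.2 ⟨he, Sym2.mem_mk_right x y⟩, hce⟩)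
    calc 2 = ({x, y} : Finset V).card := (Finset.card_pair hxy).symm
    _ ≤ (VC G C c).card := Finset.card_le_card (by intro z hz; simp at hz; rcases hz with h | h <;> subst h <;> assumption)

private lemma filter_mem_sym2_card {e : Sym2 V} (he : ¬ e.IsDiag) {s : Finset V}
    (hs : ∀ v, v ∈ s ↔ v ∈ e) : s.card = 2 := by
  classical
  induction e using Sym2.ind with
  | _ x y =>
    have hxy : x ≠ y := fun h => he (Sym2.mk_isDiag_iff.2 h)
    have : s = {x, y} := by
      ext v; rw [hs]; simp [Sym2.mem_iff]
    rw [this, Finset.card_pair hxy]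

private lemma card_eq_two_mul_ncard {G : SimpleGraph V} {M : Set (Sym2 V)}
    (hM : IsMatchingSet G M) (hMperf : ∀ v : V, ∃ e ∈ M, v ∈ e) :
    Fintype.card V = 2 * M.ncard := by
  classical
  choose f hf hvf using hMperf
  set MF := M.toFinite.toFinset with hMF
  have hfMF : ∀ v, f v ∈ MF := fun v => (Set.Finite.mem_toFinset _).2 (hf v)
  have h1 : Fintype.card V = ∑ e ∈ MF, (Finset.univ.filter (fun v => f v = e)).card := by
    rw [← Finset.card_univ]
    exact Finset.card_eq_sum_card_fiberwise (fun v _ => hfMF v)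
  have h2 : ∀ e ∈ MF, (Finset.univ.filter (fun v => f v = e)).card = 2 := by
    intro e he
    rw [Set.Finite.mem_toFinset] at he
    apply filter_mem_sym2_card (G.not_isDiag_of_mem_edgeSet (hM.1 he))
    intro v
    simp only [Finset.mem_filter, Finset.mem_univ, true_and]
    constructor
    · rintro rfl; exact hvf v
    · intro hv
      by_contra hne
      exact (hM.2 e he (f v) (hf v) (Ne.symm hne) v hv) (hvf v)
  rw [h1, Finset.sum_congr rfl h2, Finset.sum_const, smul_eq_mul,
    Set.ncard_eq_toFinset_card M, mul_comm]


private lemma VC_card {G : SimpleGraph V} (C : Sym2 V → ℕ) (c : ℕ) :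
    (VC G C c).card = ∑ v : V, if c ∈ colorsAt G C v then 1 else 0 :=
  Finset.card_filter _ _

private lemma sum_VC {G : SimpleGraph V} {C : Sym2 V → ℕ} {c : ℕ} {β : Type*} [AddCommMonoid β]
    (g : V → β) :
    ∑ v ∈ VC G C c, g v = ∑ v : V, if c ∈ colorsAt G C v then g v else 0 :=
  Finset.sum_filter _ _

end aux

private lemma arith1 {pc h mu w ms dl S : ℤ} (hs : S ≤ pc * (dl - 1 - ms))
    (c1 : pc ≤ h) (c2 : h ≤ 2 * mu) (c3 : 1 ≤ mu) (c5 : ms + 2 ≤ dl) (c6 : 1 ≤ ms)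
    (hw : dl - ms + 1 ≤ w) :
    S ≤ 2 * (w - h) + 2 * dl * (mu - 1) := by
  nlinarith [mul_nonneg (by linarith : (0:ℤ) ≤ mu - 1) (by linarith : (0:ℤ) ≤ ms - 1),
    mul_nonneg (by linarith : (0:ℤ) ≤ h - pc) (by linarith : (0:ℤ) ≤ dl - 1 - ms),
    mul_nonneg (by linarith : (0:ℤ) ≤ 2 * mu - h) (by linarith : (0:ℤ) ≤ dl + 1 - ms)]

private lemma arith0 {h mu w dl : ℤ} (c4 : h ≤ w) (c3 : 1 ≤ mu) (c0 : 0 ≤ dl) :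
    (0:ℤ) ≤ 2 * (w - h) + 2 * dl * (mu - 1) := by
  nlinarith [mul_nonneg c0 (by linarith : (0:ℤ) ≤ mu - 1)]

private lemma arith2 {p dl S : ℤ} (hs : p * (dl - 1 - (p - 1)) ≤ S) (h2 : 2 ≤ p)
    (hlt : p < dl) : 2 * (dl - p) ≤ S := by
  nlinarith [mul_nonneg (by linarith : (0:ℤ) ≤ p - 2) (by linarith : (0:ℤ) ≤ dl - p)]

private lemma key {V : Type*} [Fintype V] (G : SimpleGraph V) (δ : ℕ)
    (hδ3 : 3 ≤ δ) (hδ : ∀ v : V, δ ≤ (G.neighborSet v).ncard)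
    (M : Set (Sym2 V)) (hM : IsMatchingSet G M) (hMperf : ∀ v : V, ∃ e ∈ M, v ∈ e)
    (C : Sym2 V → ℕ) (hC : IsEdge2Coloring G C) :
    2 * δ * numColors G C ≤ (δ + 2) * Fintype.card V := by
  classical
  choose f hfM hvf using hMperf
  set n := Fintype.card V with hn
  set EF := G.edgeSet.toFinite.toFinset with hEF
  set MF := M.toFinite.toFinset with hMFdef
  set K := EF.image C with hK
  set CM := MF.image C with hCM
  set CN := K \ CM with hCNd
  set a : V → ℕ := fun v => C (f v) with ha
  have hMsub : MF ⊆ EF := by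
    intro e he
    rw [hMFdef, Set.Finite.mem_toFinset] at he
    rw [hEF, Set.Finite.mem_toFinset]
    exact hM.1 he
  have hCMK : CM ⊆ K := Finset.image_subset_image hMsub
  have hfvinc : ∀ v, f v ∈ incF G v := fun v => mem_incF.2 ⟨hM.1 (hfM v), hvf v⟩
  have haCol : ∀ v, a v ∈ colorsAt G C v := fun v => Finset.mem_image_of_mem C (hfvinc v)
  have haCM : ∀ v, a v ∈ CM := fun v =>
    Finset.mem_image_of_mem C ((Set.Finite.mem_toFinset _).2 (hfM v))
  have hcolK : ∀ v, colorsAt G C v ⊆ K := by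
    intro v c hc
    rw [colorsAt, Finset.mem_image] at hc
    obtain ⟨e, he, hce⟩ := hc
    exact Finset.mem_image.2 ⟨e, (Set.Finite.mem_toFinset _).2 (mem_incF.1 he).1, hce⟩
  have hnum : numColors G C = K.card := by
    rw [numColors, show C '' G.edgeSet = ↑K by
      rw [hK, hEF, Finset.coe_image, Set.Finite.coe_toFinset], Set.ncard_coe_finset]
  have hn2 : n = 2 * MF.card := by
    rw [hn, card_eq_two_mul_ncard hM (fun v => ⟨f v, hfM v, hvf v⟩),
      Set.ncard_eq_toFinset_card M]
  set CNdef := CN.filter (fun c => (VC G C c).card < δ) with hCNdef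
  -- double counting incidences
  have hdouble : ∑ c ∈ K, ((VC G C c).card : ℤ) = ∑ v : V, ((colorsAt G C v).card : ℤ) := by
    calc ∑ c ∈ K, ((VC G C c).card : ℤ)
        = ∑ c ∈ K, ∑ v : V, (if c ∈ colorsAt G C v then (1:ℤ) else 0) := by
          refine Finset.sum_congr rfl fun c _ => ?_
          rw [VC_card C c]
          push_cast
          rfl
      _ = ∑ v : V, ∑ c ∈ K, (if c ∈ colorsAt G C v then (1:ℤ) else 0) := Finset.sum_comm
      _ = ∑ v : V, ((colorsAt G C v).card : ℤ) := by
          refine Finset.sum_congr rfl fun v _ => ?_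
          rw [← Finset.sum_filter, Finset.filter_mem_eq_inter,
            Finset.inter_eq_right.2 (hcolK v)]
          simp
  have hK2n : ∑ c ∈ K, ((VC G C c).card : ℤ) ≤ 2 * n := by
    rw [hdouble]
    have h2 := Finset.sum_le_card_nsmul Finset.univ (fun v => ((colorsAt G C v).card : ℤ)) 2
      (fun v _ => by
        show ((colorsAt G C v).card : ℤ) ≤ 2
        exact_mod_cast card_colorsAt_le hC v)
    rw [nsmul_eq_mul, Finset.card_univ] at h2
    calc ∑ v : V, ((colorsAt G C v).card : ℤ) ≤ (Fintype.card V : ℤ) * 2 := h2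
      _ = 2 * n := by rw [hn]; ring
  -- per-color deficiency bound
  have percol : ∀ c ∈ CNdef, 2 * ((δ:ℤ) - (VC G C c).card)
      ≤ ∑ v ∈ VC G C c, ((δ:ℤ) - 1 - (mult G C v c : ℤ)) := by
    intro c hc
    rw [hCNdef, Finset.mem_filter] at hc
    obtain ⟨hcCN, hdef⟩ := hc
    have hcK : c ∈ K := by
      rw [hCNd] at hcCN
      exact (Finset.mem_sdiff.1 hcCN).1
    have hp2 : 2 ≤ (VC G C c).card := two_le_VC (by rw [hK, hEF] at hcK; exact hcK)
    have hterm : ∀ v ∈ VC G C c,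
        ((δ:ℤ) - 1 - (((VC G C c).card : ℤ) - 1)) ≤ (δ:ℤ) - 1 - (mult G C v c : ℤ) := by
      intro v hv
      have h1 := mult_add_one_le (mem_VC.1 hv)
      have h2 : (mult G C v c : ℤ) ≤ ((VC G C c).card : ℤ) - 1 := by push_cast; omega
      linarith
    have hsum := Finset.card_nsmul_le_sum (VC G C c) _ _ hterm
    rw [nsmul_eq_mul] at hsum
    have hpδ : ((VC G C c).card : ℤ) < δ := by exact_mod_cast hdef
    have hp2' : (2:ℤ) ≤ ((VC G C c).card : ℤ) := by exact_mod_cast hp2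
    exact arith2 hsum hp2' hpδ
  -- swap double sum
  set T : V → ℤ := fun v =>
    ∑ c ∈ CNdef.filter (fun c => c ∈ colorsAt G C v), ((δ:ℤ) - 1 - (mult G C v c : ℤ)) with hT
  have hswap : ∑ c ∈ CNdef, ∑ v ∈ VC G C c, ((δ:ℤ) - 1 - (mult G C v c : ℤ))
      = ∑ v : V, T v := by
    calc ∑ c ∈ CNdef, ∑ v ∈ VC G C c, ((δ:ℤ) - 1 - (mult G C v c : ℤ))
        = ∑ c ∈ CNdef, ∑ v : V,
            (if c ∈ colorsAt G C v then ((δ:ℤ) - 1 - (mult G C v c : ℤ)) else 0) :=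
          Finset.sum_congr rfl fun c _ => sum_VC _
      _ = ∑ v : V, ∑ c ∈ CNdef,
            (if c ∈ colorsAt G C v then ((δ:ℤ) - 1 - (mult G C v c : ℤ)) else 0) :=
          Finset.sum_comm
      _ = ∑ v : V, T v := by
          refine Finset.sum_congr rfl fun v _ => ?_
          simp only [hT]
          exact (Finset.sum_filter _ _).symm
  -- fiberwise regrouping by matched color
  have hfib : ∑ d ∈ CM, ∑ v ∈ Finset.univ.filter (fun v => a v = d), T v = ∑ v : V, T v :=
    Finset.sum_fiberwise_of_maps_to (fun v _ => haCM v) T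
  have hhsum : ∑ d ∈ CM, (Finset.univ.filter (fun v => a v = d)).card = n := by
    rw [hn, ← Finset.card_univ]
    exact (Finset.card_eq_sum_card_fiberwise (fun v _ => haCM v)).symm
  have hmusum : ∑ d ∈ CM, (MF.filter (fun e => C e = d)).card = MF.card := by
    rw [hCM]
    exact (Finset.card_eq_sum_card_image C MF).symm
  -- per matched color bound
  have perd : ∀ d ∈ CM, ∑ v ∈ Finset.univ.filter (fun v => a v = d), T v
      ≤ 2 * (((VC G C d).card : ℤ) - ((Finset.univ.filter (fun v => a v = d)).card : ℤ))
        + 2 * (δ:ℤ) * (((MF.filter (fun e => C e = d)).card : ℤ) - 1) := by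
    intro d hd
    have hFdVC : Finset.univ.filter (fun v => a v = d) ⊆ VC G C d := by
      intro v hv
      rw [Finset.mem_filter] at hv
      exact mem_VC.2 (hv.2 ▸ haCol v)
    have hhle : (Finset.univ.filter (fun v => a v = d)).card ≤ (VC G C d).card :=
      Finset.card_le_card hFdVC
    have hmu1 : 1 ≤ (MF.filter (fun e => C e = d)).card := by
      rw [hCM, Finset.mem_image] at hd
      obtain ⟨e, he, hce⟩ := hd
      exact Finset.card_pos.2 ⟨e, Finset.mem_filter.2 ⟨he, hce⟩⟩
    have hfib2 : (Finset.univ.filter (fun v => a v = d)).card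
        ≤ 2 * (MF.filter (fun e => C e = d)).card := by
      have hb : ∀ e ∈ (Finset.univ.filter (fun v => a v = d)).image f,
          ((Finset.univ.filter (fun v => a v = d)).filter (fun v => f v = e)).card ≤ 2 := by
        intro e he
        rw [Finset.mem_image] at he
        obtain ⟨v₀, hv₀, rfl⟩ := he
        have hcard2 : (Finset.univ.filter (fun v => v ∈ f v₀)).card = 2 :=
          filter_mem_sym2_card (G.not_isDiag_of_mem_edgeSet (hM.1 (hfM v₀)))
            (fun w => by simp)
        refine le_trans (Finset.card_le_card ?_) (le_of_eq hcard2)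
        intro u hu
        rw [Finset.mem_filter] at hu
        rw [Finset.mem_filter]
        exact ⟨Finset.mem_univ u, hu.2 ▸ hvf u⟩
      calc (Finset.univ.filter (fun v => a v = d)).card
          ≤ 2 * ((Finset.univ.filter (fun v => a v = d)).image f).card :=
            Finset.card_le_mul_card_image _ 2 hb
        _ ≤ 2 * (MF.filter (fun e => C e = d)).card := by
            refine Nat.mul_le_mul_left 2 (Finset.card_le_card ?_)
            intro e he
            rw [Finset.mem_image] at he
            obtain ⟨v, hv, rfl⟩ := he
            rw [Finset.mem_filter] at hv
            exact Finset.mem_filter.2 ⟨(Set.Finite.mem_toFinset _).2 (hfM v), hv.2⟩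
    set P := ((Finset.univ.filter (fun v => a v = d)) ×ˢ CNdef).filter
      (fun p => p.2 ∈ colorsAt G C p.1) with hP
    have hsum_eq : ∑ v ∈ Finset.univ.filter (fun v => a v = d), T v
        = ∑ p ∈ P, ((δ:ℤ) - 1 - (mult G C p.1 p.2 : ℤ)) := by
      symm
      rw [hP, Finset.sum_filter, Finset.sum_product]
      refine Finset.sum_congr rfl fun v _ => ?_
      simp only [hT]
      exact (Finset.sum_filter _ _).symm
    have hScard : ∀ v : V, (CNdef.filter (fun c => c ∈ colorsAt G C v)).card ≤ 1 := by
      intro v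
      have hsub : CNdef.filter (fun c => c ∈ colorsAt G C v) ⊆ colorsAt G C v \ {a v} := by
        intro c hc
        rw [Finset.mem_filter] at hc
        have hcCN : c ∈ CN := by
          have := hc.1
          rw [hCNdef, Finset.mem_filter] at this
          exact this.1
        have hne : c ≠ a v := by
          intro hcav
          rw [hCNd] at hcCN
          exact (Finset.mem_sdiff.1 hcCN).2 (hcav ▸ haCM v)
        exact Finset.mem_sdiff.2 ⟨hc.2, by simp [hne]⟩
      refine le_trans (Finset.card_le_card hsub) ?_
      rw [Finset.card_sdiff_of_subset (Finset.singleton_subset_iff.2 (haCol v))]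
      have h2 := card_colorsAt_le hC v
      simp only [Finset.card_singleton]
      omega
    have hPF : P.card ≤ (Finset.univ.filter (fun v => a v = d)).card := by
      apply Finset.card_le_card_of_injOn Prod.fst
      · intro p hp
        rw [hP, Finset.mem_coe, Finset.mem_filter, Finset.mem_product] at hp
        exact hp.1.1
      · intro p hp q hq hpq
        rw [Finset.mem_coe, hP, Finset.mem_filter, Finset.mem_product] at hp hq
        have hps : p.2 ∈ CNdef.filter (fun c => c ∈ colorsAt G C p.1) :=
          Finset.mem_filter.2 ⟨hp.1.2, hp.2⟩
        have hqs : q.2 ∈ CNdef.filter (fun c => c ∈ colorsAt G C p.1) := by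
          refine Finset.mem_filter.2 ⟨hq.1.2, ?_⟩
          rw [hpq]
          exact hq.2
        have h21 := Finset.card_le_one.1 (hScard p.1) _ hps _ hqs
        exact Prod.ext hpq h21
    rcases P.eq_empty_or_nonempty with hPe | hPne
    · rw [hsum_eq, hPe, Finset.sum_empty]
      have c4 : ((Finset.univ.filter (fun v => a v = d)).card : ℤ) ≤ ((VC G C d).card : ℤ) := by
        exact_mod_cast hhle
      have c3 : (1:ℤ) ≤ ((MF.filter (fun e => C e = d)).card : ℤ) := by exact_mod_cast hmu1
      have c0 : (0:ℤ) ≤ (δ:ℤ) := by positivity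
      exact arith0 c4 c3 c0
    · obtain ⟨p₀, hp₀, hmin⟩ := Finset.exists_min_image P (fun p => mult G C p.1 p.2) hPne
      have hp₀' := hp₀
      rw [hP, Finset.mem_filter, Finset.mem_product] at hp₀'
      obtain ⟨⟨hv₀Fd, hc₀CNdef⟩, hc₀col⟩ := hp₀'
      have hav₀ : a p₀.1 = d := (Finset.mem_filter.1 hv₀Fd).2
      have hc₀CN : p₀.2 ∈ CN := by
        rw [hCNdef, Finset.mem_filter] at hc₀CNdef
        exact hc₀CNdef.1
      have hc₀def : (VC G C p₀.2).card < δ := by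
        rw [hCNdef, Finset.mem_filter] at hc₀CNdef
        exact hc₀CNdef.2
      have hmus1 : 1 ≤ mult G C p₀.1 p₀.2 := mult_pos hc₀col
      have hmus2 : mult G C p₀.1 p₀.2 + 2 ≤ δ := by
        have := mult_add_one_le hc₀col
        omega
      have hc₀d : p₀.2 ≠ d := by
        intro h
        rw [hCNd] at hc₀CN
        exact (Finset.mem_sdiff.1 hc₀CN).2 (h ▸ hd)
      have hcolv₀ : colorsAt G C p₀.1 = {p₀.2, d} := by
        refine (Finset.eq_of_subset_of_card_le ?_ ?_).symm
        · intro c hc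
          rcases Finset.mem_insert.1 hc with h | h
          · rw [h]; exact hc₀col
          · rw [Finset.mem_singleton.1 h, ← hav₀]; exact haCol p₀.1
        · rw [Finset.card_pair hc₀d]
          exact card_colorsAt_le hC p₀.1
      have hmd : (δ:ℤ) - (mult G C p₀.1 p₀.2 : ℤ) ≤ (mult G C p₀.1 d : ℤ) := by
        have hdeg : δ ≤ (incF G p₀.1).card := delta_le_card_incF hδ p₀.1
        have hsm := sum_mult (G := G) (C := C) p₀.1
        rw [hcolv₀, Finset.sum_pair hc₀d] at hsm
        push_cast
        omega
      have hVCd : (δ:ℤ) - (mult G C p₀.1 p₀.2 : ℤ) + 1 ≤ ((VC G C d).card : ℤ) := by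
        have hmem : d ∈ colorsAt G C p₀.1 := by rw [hcolv₀]; simp
        have h3 := mult_add_one_le hmem
        push_cast at hmd ⊢
        omega
      have hbound : ∀ p ∈ P, ((δ:ℤ) - 1 - (mult G C p.1 p.2 : ℤ))
          ≤ (δ:ℤ) - 1 - (mult G C p₀.1 p₀.2 : ℤ) := by
        intro p hp
        have h4 : (mult G C p₀.1 p₀.2 : ℤ) ≤ (mult G C p.1 p.2 : ℤ) := by
          exact_mod_cast hmin p hp
        linarith
      have hsumP := Finset.sum_le_card_nsmul P _ _ hbound
      rw [nsmul_eq_mul] at hsumP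
      rw [hsum_eq]
      have c1 : ((P.card : ℤ)) ≤ ((Finset.univ.filter (fun v => a v = d)).card : ℤ) := by
        exact_mod_cast hPF
      have c2 : ((Finset.univ.filter (fun v => a v = d)).card : ℤ)
          ≤ 2 * ((MF.filter (fun e => C e = d)).card : ℤ) := by exact_mod_cast hfib2
      have c3 : (1:ℤ) ≤ ((MF.filter (fun e => C e = d)).card : ℤ) := by exact_mod_cast hmu1
      have c5 : (mult G C p₀.1 p₀.2 : ℤ) + 2 ≤ (δ:ℤ) := by exact_mod_cast hmus2
      have c6 : (1:ℤ) ≤ (mult G C p₀.1 p₀.2 : ℤ) := by exact_mod_cast hmus1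
      exact arith1 hsumP c1 c2 c3 c5 c6 hVCd
  -- assembly
  have step1 : 2 * (δ:ℤ) * CN.card ≤ (∑ c ∈ CN, 2 * ((VC G C c).card : ℤ))
      + ∑ c ∈ CNdef, 2 * ((δ:ℤ) - (VC G C c).card) := by
    have hper : ∀ c ∈ CN, 2 * (δ:ℤ) ≤ 2 * ((VC G C c).card : ℤ)
        + (if (VC G C c).card < δ then 2 * ((δ:ℤ) - (VC G C c).card) else 0) := by
      intro c hc
      by_cases h : (VC G C c).card < δ
      · rw [if_pos h]; ring_nf; linarith
      · rw [if_neg h]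
        have h5 : (δ:ℤ) ≤ ((VC G C c).card : ℤ) := by exact_mod_cast not_lt.1 h
        linarith
    calc 2 * (δ:ℤ) * CN.card = ∑ _c ∈ CN, 2 * (δ:ℤ) := by
          rw [Finset.sum_const, nsmul_eq_mul]; ring
      _ ≤ ∑ c ∈ CN, (2 * ((VC G C c).card : ℤ)
            + (if (VC G C c).card < δ then 2 * ((δ:ℤ) - (VC G C c).card) else 0)) :=
          Finset.sum_le_sum hper
      _ = (∑ c ∈ CN, 2 * ((VC G C c).card : ℤ))
            + ∑ c ∈ CN, (if (VC G C c).card < δ then 2 * ((δ:ℤ) - (VC G C c).card) else 0) :=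
          Finset.sum_add_distrib
      _ = (∑ c ∈ CN, 2 * ((VC G C c).card : ℤ))
            + ∑ c ∈ CNdef, 2 * ((δ:ℤ) - (VC G C c).card) := by
          rw [hCNdef, Finset.sum_filter]
  have step2 : ∑ c ∈ CNdef, 2 * ((δ:ℤ) - (VC G C c).card)
      ≤ ∑ c ∈ CNdef, ∑ v ∈ VC G C c, ((δ:ℤ) - 1 - (mult G C v c : ℤ)) :=
    Finset.sum_le_sum percol
  have step4 : ∑ v : V, T v ≤ ∑ d ∈ CM,
      (2 * (((VC G C d).card : ℤ) - ((Finset.univ.filter (fun v => a v = d)).card : ℤ))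
        + 2 * (δ:ℤ) * (((MF.filter (fun e => C e = d)).card : ℤ) - 1)) := by
    rw [← hfib]
    exact Finset.sum_le_sum perd
  have e1 : ∑ d ∈ CM, (((Finset.univ.filter (fun v => a v = d)).card : ℤ)) = (n : ℤ) := by
    exact_mod_cast hhsum
  have e2 : ∑ d ∈ CM, (((MF.filter (fun e => C e = d)).card : ℤ)) = (MF.card : ℤ) := by
    exact_mod_cast hmusum
  have step5 : ∑ d ∈ CM,
      (2 * (((VC G C d).card : ℤ) - ((Finset.univ.filter (fun v => a v = d)).card : ℤ))
        + 2 * (δ:ℤ) * (((MF.filter (fun e => C e = d)).card : ℤ) - 1))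
      = 2 * (∑ d ∈ CM, ((VC G C d).card : ℤ)) - 2 * n
        + 2 * δ * MF.card - 2 * δ * CM.card := by
    rw [Finset.sum_add_distrib]
    have s1 : ∑ d ∈ CM,
        2 * (((VC G C d).card : ℤ) - ((Finset.univ.filter (fun v => a v = d)).card : ℤ))
        = 2 * (∑ d ∈ CM, ((VC G C d).card : ℤ)) - 2 * n := by
      calc ∑ d ∈ CM,
            2 * (((VC G C d).card : ℤ) - ((Finset.univ.filter (fun v => a v = d)).card : ℤ))
          = (∑ d ∈ CM, 2 * ((VC G C d).card : ℤ))
            - ∑ d ∈ CM, 2 * (((Finset.univ.filter (fun v => a v = d)).card : ℤ)) := by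
            rw [← Finset.sum_sub_distrib]
            exact Finset.sum_congr rfl fun d _ => by ring
        _ = 2 * (∑ d ∈ CM, ((VC G C d).card : ℤ)) - 2 * n := by
            rw [← Finset.mul_sum, ← Finset.mul_sum, e1]
    have s2 : ∑ d ∈ CM, 2 * (δ:ℤ) * (((MF.filter (fun e => C e = d)).card : ℤ) - 1)
        = 2 * δ * MF.card - 2 * δ * CM.card := by
      calc ∑ d ∈ CM, 2 * (δ:ℤ) * (((MF.filter (fun e => C e = d)).card : ℤ) - 1)
          = (∑ d ∈ CM, 2 * (δ:ℤ) * (((MF.filter (fun e => C e = d)).card : ℤ)))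
            - ∑ _d ∈ CM, 2 * (δ:ℤ) := by
            rw [← Finset.sum_sub_distrib]
            exact Finset.sum_congr rfl fun d _ => by ring
        _ = 2 * δ * MF.card - 2 * δ * CM.card := by
            rw [← Finset.mul_sum, e2, Finset.sum_const, nsmul_eq_mul]
            ring
    rw [s1, s2]
    ring
  have hsplit : (∑ c ∈ CN, ((VC G C c).card : ℤ)) + ∑ d ∈ CM, ((VC G C d).card : ℤ)
      = ∑ c ∈ K, ((VC G C c).card : ℤ) := by
    rw [hCNd]
    exact Finset.sum_sdiff hCMK
  have hcard : CN.card + CM.card = K.card := by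
    rw [hCNd]; exact Finset.card_sdiff_add_card_eq_card hCMK
  have hcard' : 2 * (δ:ℤ) * CN.card + 2 * (δ:ℤ) * CM.card = 2 * (δ:ℤ) * K.card := by
    have h6 : (CN.card : ℤ) + CM.card = K.card := by exact_mod_cast hcard
    linear_combination 2 * (δ:ℤ) * h6
  have hn2' : 2 * (δ:ℤ) * MF.card = (δ:ℤ) * n := by
    have h7 : (n : ℤ) = 2 * MF.card := by exact_mod_cast hn2
    linear_combination (-(δ:ℤ)) * h7
  have hmulsum : ∑ c ∈ CN, 2 * ((VC G C c).card : ℤ) = 2 * ∑ c ∈ CN, ((VC G C c).card : ℤ) :=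
    (Finset.mul_sum _ _ _).symm
  have final : ((2 * δ * numColors G C : ℕ) : ℤ) ≤ (((δ + 2) * n : ℕ) : ℤ) := by
    rw [hnum]
    push_cast
    linarith [step1, step2, hswap, step4, step5, hsplit, hK2n, hcard', hn2', hmulsum]
  exact_mod_cast final



/-- For a graph with minimum degree `δ ≥ 3` and a perfect matching `M`,
`OPT(G) ≤ (1 + 2/δ)·ALG(G, M)`. -/
theorem opt_le_alg_perfectMatching {V : Type*} [Fintype V] (G : SimpleGraph V) (δ : ℕ)
    (hδ3 : 3 ≤ δ) (hδ : ∀ v : V, δ ≤ (G.neighborSet v).ncard)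
    (M : Set (Sym2 V)) (hM : IsMatchingSet G M) (hMperf : ∀ v : V, ∃ e ∈ M, v ∈ e) :
    (OPT G : ℝ) ≤ (1 + 2 / (δ : ℝ)) * (ALG G M : ℝ) := by
  classical
  set S := {k : ℕ | ∃ C : Sym2 V → ℕ, IsEdge2Coloring G C ∧ numColors G C = k} with hS
  have hconst : IsEdge2Coloring G (fun _ => 0) := by
    intro v
    refine le_trans (Set.ncard_le_ncard ?_ (Set.finite_singleton 0)) ?_
    · intro x hx
      obtain ⟨e, -, rfl⟩ := hx
      rfl
    · simp
  have hne : S.Nonempty := ⟨numColors G (fun _ => 0), ⟨fun _ => 0, hconst, rfl⟩⟩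
  have hkey : ∀ k ∈ S, 2 * δ * k ≤ (δ + 2) * Fintype.card V := by
    rintro k ⟨C, hC, rfl⟩
    exact key G δ hδ3 hδ M hM hMperf C hC
  have hbdd : BddAbove S := by
    refine ⟨(δ + 2) * Fintype.card V, fun k hk => ?_⟩
    refine le_trans ?_ (hkey k hk)
    have : 0 < 2 * δ := by omega
    exact Nat.le_mul_of_pos_left k this
  have hOPT : OPT G ∈ S := Nat.sSup_mem hne hbdd
  have hmain : 2 * δ * OPT G ≤ (δ + 2) * Fintype.card V := hkey _ hOPT
  have hn2 : Fintype.card V = 2 * M.ncard := card_eq_two_mul_ncard hM hMperf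
  have hALG : M.ncard ≤ ALG G M := Nat.le_add_right _ _
  have hNat : δ * OPT G ≤ (δ + 2) * ALG G M := by
    have h1 : 2 * (δ * OPT G) ≤ 2 * ((δ + 2) * M.ncard) := by
      calc 2 * (δ * OPT G) = 2 * δ * OPT G := by ring
        _ ≤ (δ + 2) * Fintype.card V := hmain
        _ = 2 * ((δ + 2) * M.ncard) := by rw [hn2]; ring
    have h2 : δ * OPT G ≤ (δ + 2) * M.ncard := by omega
    exact le_trans h2 (Nat.mul_le_mul_left _ hALG)
  have hδ0 : (0:ℝ) < (δ:ℝ) := by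
    have : 0 < δ := by omega
    exact_mod_cast this
  rw [show (1 + 2 / (δ:ℝ)) = ((δ:ℝ) + 2) / δ by field_simp]
  rw [div_mul_eq_mul_div, le_div_iff₀ hδ0]
  have hcast : ((δ * OPT G : ℕ) : ℝ) ≤ (((δ + 2) * ALG G M : ℕ) : ℝ) := by
    exact_mod_cast hNat
  push_cast at hcast
  nlinarith [hcast]
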